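/- Let H be a hb-graph on Fin n with hb-edges e_1, …, e_p of m-cardinalities ρ_k satisfying 1 ≤ ρ_k ≤ r, where r ≥ 2 is the m-range of H, and let A_str be the e-adjacency hypermatrix of its straightforward m-uniformized hb-graph with single null vertex N_1. Then the sum of the entries of A_str over all tuples whose first coordinate is N_1 equals Σ_k (r − ρ_k) = Σ_{j=1}^{r−1} (r − j) · |{k : ρ_k = j}|. -/

import Mathlib

/-- The hb-edges of the straightforward m-uniformized hb-graph: the original
multiplicities on the original vertices `Sum.inl i`, and multiplicity `r − ρ_k`
on the single null vertex `N_1 = Sum.inr ()`, where `ρ_k = Σ_j e_k(j)` is the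
m-cardinality of the hb-edge. -/
def strEdge (n p r : ℕ) (e : Fin p → Fin n → ℕ) (k : Fin p) :
    Fin n ⊕ Unit → ℕ
  | Sum.inl i => e k i
  | Sum.inr _ => r - ∑ j, e k j

/-- The e-adjacency hypermatrix of the straightforward m-uniformized hb-graph:
`A_str(t) = Σ_k (∏_v ê_k(v)!)/(r−1)! · [t realizes ê_k]`. -/
noncomputable def Astr (n p r : ℕ) (e : Fin p → Fin n → ℕ)
    (t : Fin r → Fin n ⊕ Unit) : ℝ :=
  ∑ k, if ∀ v, (Finset.univ.filter (fun s => t s = v)).card = strEdge n p r e k v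
       then ((∏ v, (strEdge n p r e k v).factorial : ℕ) : ℝ) / (r - 1).factorial
       else 0

section Aux

variable {V : Type*} [Fintype V] [DecidableEq V]

def Rset (V : Type*) [Fintype V] [DecidableEq V] (m : ℕ) (c : V → ℕ) : Finset (Fin m → V) :=
  Finset.univ.filter (fun t => ∀ v, (Finset.univ.filter (fun s => t s = v)).card = c v)

lemma card_filter_succ (m : ℕ) (t : Fin (m+1) → V) (u : V) :
    (Finset.univ.filter (fun s => t s = u)).card
      = (if t 0 = u then 1 else 0) + (Finset.univ.filter (fun s : Fin m => t s.succ = u)).card := by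
  rw [Finset.card_filter, Fin.sum_univ_succ, Finset.card_filter]

lemma fiber_empty (m : ℕ) (c : V → ℕ) (v : V) (hv : c v = 0) :
    ((Rset V (m+1) c).filter (fun t => t 0 = v)) = ∅ := by
  ext t
  simp only [Finset.mem_filter, Rset, Finset.mem_univ, true_and, Finset.notMem_empty,
    iff_false, not_and]
  intro ht h0
  have := ht v
  rw [hv, Finset.card_eq_zero] at this
  have : (0 : Fin (m+1)) ∈ (Finset.univ.filter (fun s => t s = v)) := by
    simp [h0]
  simp_all

lemma card_fiber (m : ℕ) (c : V → ℕ) (v : V) (hv : 1 ≤ c v) :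
    ((Rset V (m+1) c).filter (fun t => t 0 = v)).card
      = (Rset V m (Function.update c v (c v - 1))).card := by
  apply Finset.card_bij' (fun t _ => t ∘ Fin.succ) (fun t' _ => Fin.cases v t')
  · intro t ht
    simp only [Finset.mem_filter, Rset, Finset.mem_univ, true_and] at ht ⊢
    obtain ⟨ht, h0⟩ := ht
    intro u
    have := card_filter_succ m t u
    rw [ht u, h0] at this
    simp only [Function.comp]
    rw [Function.update_apply]
    split_ifs with h
    · subst h; rw [if_pos rfl] at this; omega
    · rw [if_neg (fun e : v = u => h e.symm)] at this; omega
  · intro t' ht'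
    simp only [Finset.mem_filter, Rset, Finset.mem_univ, true_and] at ht' ⊢
    refine ⟨fun u => ?_, by simp⟩
    have := card_filter_succ m (Fin.cases v t' : Fin (m+1) → V) u
    rw [this]
    simp only [Fin.cases_zero, Fin.cases_succ]
    have h2 : (Finset.univ.filter (fun s : Fin m => t' s = u)).card
        = Function.update c v (c v - 1) u := ht' u
    rcases eq_or_ne v u with rfl | hne
    · show (if v = v then 1 else 0) + (Finset.univ.filter (fun s : Fin m => t' s = v)).card = c v
      rw [if_pos rfl, h2, Function.update_self]; omega
    · show (if v = u then 1 else 0) + (Finset.univ.filter (fun s : Fin m => t' s = u)).card = c u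
      rw [if_neg hne, h2, Function.update_of_ne (Ne.symm hne)]; omega
  · intro t ht
    funext s
    cases s using Fin.cases with
    | zero => simp only [Fin.cases_zero]; exact ((Finset.mem_filter.mp ht).2).symm
    | succ i => simp
  · intro t' _
    funext s
    simp

lemma sum_update_pred (c : V → ℕ) (v : V) (hpos : 1 ≤ c v) :
    ∑ u, Function.update c v (c v - 1) u + 1 = ∑ u, c u := by
  have h2 : c v + ∑ u ∈ Finset.univ.erase v, c u = ∑ u, c u := by
    rw [Finset.add_sum_erase _ c (Finset.mem_univ v)]
  rw [Finset.sum_update_of_mem (Finset.mem_univ v), Finset.sdiff_singleton_eq_erase]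
  omega

lemma prod_factorial_update (c : V → ℕ) (v : V) (hpos : 1 ≤ c v) :
    ∏ u, (c u).factorial = c v * ∏ u, (Function.update c v (c v - 1) u).factorial := by
  have hA : ∏ u, (c u).factorial
      = (c v).factorial * ∏ u ∈ Finset.univ.erase v, (c u).factorial :=
    (Finset.mul_prod_erase _ _ (Finset.mem_univ v)).symm
  have hB : ∏ u, (Function.update c v (c v - 1) u).factorial
      = (c v - 1).factorial * ∏ u ∈ Finset.univ.erase v, (c u).factorial := by
    rw [← Finset.mul_prod_erase Finset.univ _ (Finset.mem_univ v),
      Function.update_self]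
    congr 1
    exact Finset.prod_congr rfl
      (fun u hu => by rw [Function.update_of_ne (Finset.ne_of_mem_erase hu)])
  rw [hA, hB, ← mul_assoc]
  congr 1
  rw [← Nat.succ_pred_eq_of_pos hpos, Nat.factorial_succ]
  congr 1 <;> omega

lemma lemA : ∀ (m : ℕ) (c : V → ℕ), (∑ v, c v = m) →
    (Rset V m c).card * ∏ v, (c v).factorial = m.factorial := by
  intro m
  induction m with
  | zero =>
    intro c hc
    have hc0 : ∀ v, c v = 0 := by
      intro v
      exact Finset.sum_eq_zero_iff.mp hc v (Finset.mem_univ v)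
    have h1 : Rset V 0 c = Finset.univ := by
      ext t
      simp [Rset, hc0, Finset.filter_eq_empty_iff]
    rw [h1]
    simp [hc0, Finset.card_univ]
  | succ m ih =>
    intro c hc
    rw [Finset.card_eq_sum_card_fiberwise
      (f := fun t : Fin (m+1) → V => t 0) (t := Finset.univ) (fun x _ => Finset.mem_univ _)]
    rw [Finset.sum_mul]
    have key : ∀ v : V,
        ((Rset V (m+1) c).filter (fun t => t 0 = v)).card * ∏ u, (c u).factorial
          = c v * m.factorial := by
      intro v
      rcases Nat.eq_zero_or_pos (c v) with h0 | hpos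
      · rw [fiber_empty m c v h0, h0]; simp
      · rw [card_fiber m c v hpos]
        have hsum : ∑ u, Function.update c v (c v - 1) u = m := by
          have := sum_update_pred c v hpos
          omega
        rw [prod_factorial_update c v hpos, ← mul_assoc, mul_comm _ (c v), mul_assoc,
          ih _ hsum]
    calc ∑ v : V, ((Rset V (m+1) c).filter (fun t => t 0 = v)).card * ∏ u, (c u).factorial
        = ∑ v : V, c v * m.factorial := Finset.sum_congr rfl (fun v _ => key v)
      _ = (m+1).factorial := by rw [← Finset.sum_mul, hc, Nat.factorial_succ]

end Aux

/-- For a hb-graph on `Fin n` with hb-edges of m-cardinalities `ρ_k` satisfying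
`1 ≤ ρ_k ≤ r`, where `r ≥ 2` is the m-range, the sum of the entries of the
straightforward e-adjacency hypermatrix over all tuples whose first coordinate is
the null vertex `N_1` equals `Σ_k (r − ρ_k) = Σ_{j=1}^{r−1} (r − j) · |{k : ρ_k = j}|`. -/
theorem stmt11 (n p r : ℕ) (hr : 2 ≤ r) (e : Fin p → Fin n → ℕ)
    (hlo : ∀ k, 1 ≤ ∑ j, e k j) (hub : ∀ k, ∑ j, e k j ≤ r)
    (hrange : Finset.univ.sup (fun k : Fin p => ∑ j, e k j) = r) :
    (∑ t ∈ Finset.univ.filter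
        (fun t : Fin r → Fin n ⊕ Unit => t ⟨0, by omega⟩ = Sum.inr ()),
      Astr n p r e t)
      = ((∑ k, (r - ∑ j, e k j) : ℕ) : ℝ) ∧
    (∑ k, (r - ∑ j, e k j))
      = ∑ q ∈ Finset.Icc 1 (r - 1),
          (r - q) * (Finset.univ.filter (fun k : Fin p => ∑ j, e k j = q)).card := by
  
  obtain ⟨m, rfl⟩ : ∃ m, r = m + 1 := ⟨r - 1, by omega⟩
  set V := Fin n ⊕ Unit
  set N : V := Sum.inr ()
  constructor
  · unfold Astr
    rw [Finset.sum_comm, Nat.cast_sum]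
    apply Finset.sum_congr rfl
    intro k _
    set c : V → ℕ := strEdge n p (m+1) e k with hc
    set ρ := ∑ j, e k j with hρ
    have hcN : c N = (m + 1) - ρ := rfl
    have hsc : ∑ v, c v = m + 1 := by
      rw [Fintype.sum_sum_type]
      have h1 : ∑ i : Fin n, c (Sum.inl i) = ρ := rfl
      have h2 : ∑ u : Unit, c (Sum.inr u) = (m+1) - ρ := by simp [hcN]; exact hcN
      rw [h1, h2]
      have := hub k
      omega
    have hset : (Finset.univ.filter
          (fun t : Fin (m+1) → V => t ⟨0, by omega⟩ = N)).filter
          (fun t => ∀ v, (Finset.univ.filter (fun s => t s = v)).card = c v)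
        = (Rset V (m+1) c).filter (fun t => t 0 = N) := by
      ext t
      simp only [Finset.mem_filter, Rset, Finset.mem_univ, true_and]
      constructor
      · rintro ⟨h1, h2⟩; exact ⟨h2, h1⟩
      · rintro ⟨h1, h2⟩; exact ⟨h2, h1⟩
    rw [← Finset.sum_filter, hset, Finset.sum_const, nsmul_eq_mul]
    have hm1 : (m + 1 - 1) = m := by omega
    rw [hm1]
    rcases Nat.eq_zero_or_pos (c N) with h0 | hpos
    · rw [fiber_empty m c N h0]
      rw [hcN] at h0
      rw [h0]
      simp
    · rw [card_fiber m c N hpos]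
      set c' : V → ℕ := Function.update c N (c N - 1) with hc'
      have hsum' : ∑ u, c' u = m := by
        have h := sum_update_pred c N hpos
        rw [← hc'] at h
        omega
      have hcard : (Rset V m c').card * ∏ u, (c' u).factorial = m.factorial :=
        lemA m c' hsum'
      have hprod : ∏ u, (c u).factorial = c N * ∏ u, (c' u).factorial := by
        have h := prod_factorial_update c N hpos
        rw [← hc'] at h
        exact h
      have hm : (m.factorial : ℝ) ≠ 0 := by
        exact_mod_cast Nat.factorial_ne_zero m
      have h1 : ((Rset V m c').card : ℝ) * ((∏ u, (c' u).factorial : ℕ) : ℝ)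
          = (m.factorial : ℝ) := by exact_mod_cast hcard
      rw [← mul_div_assoc, hprod, div_eq_iff hm, ← hcN]
      push_cast
      push_cast at h1
      linear_combination (c N : ℝ) * h1
  · have hmaps : ∀ k ∈ (Finset.univ : Finset (Fin p)),
        (∑ j, e k j) ∈ Finset.Icc 1 (m+1) := by
      intro k _
      rw [Finset.mem_Icc]
      exact ⟨hlo k, hub k⟩
    rw [← Finset.sum_fiberwise_of_maps_to hmaps (fun k => (m+1) - ∑ j, e k j)]
    have hm1 : (m + 1 - 1) = m := by omega
    rw [hm1]
    have hstep : ∀ q, (∑ k ∈ Finset.univ.filter (fun k : Fin p => ∑ j, e k j = q),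
        ((m+1) - ∑ j, e k j))
        = ((m+1) - q) * (Finset.univ.filter (fun k : Fin p => ∑ j, e k j = q)).card := by
      intro q
      rw [Finset.sum_congr rfl (fun k hk => by
        rw [(Finset.mem_filter.mp hk).2]), Finset.sum_const, smul_eq_mul, mul_comm]
    have := Finset.sum_Icc_succ_top (a := 1) (b := m)
      (f := fun q => ((m+1) - q) * (Finset.univ.filter (fun k : Fin p => ∑ j, e k j = q)).card)
      (by omega)
    calc ∑ q ∈ Finset.Icc 1 (m+1),
          ∑ k ∈ Finset.univ.filter (fun k : Fin p => ∑ j, e k j = q), ((m+1) - ∑ j, e k j)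
        = ∑ q ∈ Finset.Icc 1 (m+1),
          ((m+1) - q) * (Finset.univ.filter (fun k : Fin p => ∑ j, e k j = q)).card :=
          Finset.sum_congr rfl (fun q _ => hstep q)
      _ = ∑ q ∈ Finset.Icc 1 m,
          ((m+1) - q) * (Finset.univ.filter (fun k : Fin p => ∑ j, e k j = q)).card := by
          rw [this]; simp
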